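/- For β ∈ (0,1) define f(ζ;β) := ζ + (8/π)·tan²(πβ/2)·sinh(πζ/2)/( cos(πβ/2) + cosh(πζ/2) ), γ(β) := −8·sin(πβ/2)·sec³(πβ/2), and W_ζ(ζ) := 1 + (γ(β)/(4i))·[coth(π(ζ−iβ)/2) − coth(π(ζ+iβ)/2)]. Then for every ξ ∈ ℝ, ∂_ζ f(ξ + i; β) ≠ 0 and |W_ζ(ξ + i)| = |∂_ζ f(ξ + i; β)|. -/

import Mathlib

open Set

/-- Complex hyperbolic cotangent. -/
noncomputable def cCoth (z : ℂ) : ℂ := Complex.cosh z / Complex.sinh z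

/-- The derivative `W_ζ` of the complex relative velocity potential for a point vortex of
strength `γ` at `iβ` and a mirror vortex of strength `-γ` at `-iβ` in the strip. -/
noncomputable def Wzeta (γ β : ℝ) (z : ℂ) : ℂ :=
  1 + (γ : ℂ) / (4 * Complex.I) *
    (cCoth ((Real.pi : ℂ) / 2 * (z - Complex.I * β)) -
      cCoth ((Real.pi : ℂ) / 2 * (z + Complex.I * β)))

/-- The conformal map of the explicit zero-gravity solitary wave of
Crowdy–Nelson–Krishnamurthy. -/
noncomputable def fCNK (β : ℝ) (z : ℂ) : ℂ :=
  z + ((8 / Real.pi * Real.tan (Real.pi * β / 2) ^ 2 : ℝ) : ℂ) *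
    Complex.sinh ((Real.pi : ℂ) * z / 2) /
      (((Real.cos (Real.pi * β / 2) : ℝ) : ℂ) + Complex.cosh ((Real.pi : ℂ) * z / 2))

/-- The circulation of the explicit zero-gravity solitary wave. -/
noncomputable def gammaCNK (β : ℝ) : ℝ :=
  -8 * Real.sin (Real.pi * β / 2) / Real.cos (Real.pi * β / 2) ^ 3

lemma csinh_eval (x y : ℝ) :
    Complex.sinh ((x:ℂ) + (y:ℂ)*Complex.I) =
      (Real.sinh x * Real.cos y : ℝ) + ((Real.cosh x * Real.sin y : ℝ) : ℂ)*Complex.I := by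
  rw [Complex.sinh_add, Complex.sinh_mul_I, Complex.cosh_mul_I]
  push_cast; ring

lemma ccosh_eval (x y : ℝ) :
    Complex.cosh ((x:ℂ) + (y:ℂ)*Complex.I) =
      (Real.cosh x * Real.cos y : ℝ) + ((Real.sinh x * Real.sin y : ℝ) : ℂ)*Complex.I := by
  rw [Complex.cosh_add, Complex.sinh_mul_I, Complex.cosh_mul_I]
  push_cast; ring

lemma keyiden (s cb sb T : ℝ) (hcb : cb ≠ 0) (hpyth : sb^2 + cb^2 = 1) (hT : T = sb^2/cb^2) :
    (cb^2 - s^2 + 4*T)^2 + (2*cb*s + 4*T*cb*s)^2 = (s^2 + cb^2 + 4*T)^2 := by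
  have hsb2 : sb^2 = 1 - cb^2 := by linarith
  rw [hsb2] at hT
  subst hT
  field_simp
  ring

lemma Idiv (aa kk dd : ℂ) : aa/(4*Complex.I)*(kk*Complex.I/dd) = aa*kk/(4*dd) := by
  rw [div_mul_div_comm]
  have h1 : aa*(kk*Complex.I) = (aa*kk)*Complex.I := by ring
  have h2 : 4*Complex.I*dd = (4*dd)*Complex.I := by ring
  rw [h1, h2, mul_div_mul_right _ _ Complex.I_ne_zero]

lemma deriv_fCNK_eval (β : ℝ) (ξ : ℝ)
    (hden : ((Real.cos (Real.pi * β / 2) : ℝ) : ℂ) +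
      Complex.cosh ((Real.pi : ℂ) * ((ξ:ℂ) + Complex.I) / 2) ≠ 0) :
    deriv (fCNK β) ((ξ:ℂ) + Complex.I) =
      1 + ((((8 / Real.pi * Real.tan (Real.pi * β / 2) ^ 2 : ℝ) : ℂ) *
            (Complex.cosh ((Real.pi:ℂ) * ((ξ:ℂ)+Complex.I) / 2) * ((Real.pi:ℂ)/2))) *
            (((Real.cos (Real.pi * β / 2) : ℝ) : ℂ) +
              Complex.cosh ((Real.pi:ℂ) * ((ξ:ℂ)+Complex.I)/2)) -
          ((8 / Real.pi * Real.tan (Real.pi * β / 2) ^ 2 : ℝ) : ℂ) *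
            Complex.sinh ((Real.pi:ℂ) * ((ξ:ℂ)+Complex.I)/2) *
            (Complex.sinh ((Real.pi:ℂ) * ((ξ:ℂ)+Complex.I)/2) * ((Real.pi:ℂ)/2))) /
        (((Real.cos (Real.pi * β / 2) : ℝ) : ℂ) +
          Complex.cosh ((Real.pi:ℂ) * ((ξ:ℂ)+Complex.I)/2))^2 := by
  set C : ℂ := ((8 / Real.pi * Real.tan (Real.pi * β / 2) ^ 2 : ℝ) : ℂ)
  set a : ℂ := ((Real.cos (Real.pi * β / 2) : ℝ) : ℂ)
  set z₀ : ℂ := (ξ:ℂ) + Complex.I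
  have hin : HasDerivAt (fun z : ℂ => (Real.pi:ℂ) * z / 2) ((Real.pi:ℂ)/2) z₀ := by
    simpa using ((hasDerivAt_id z₀).const_mul (Real.pi:ℂ)).div_const 2
  have hsinh : HasDerivAt (fun z : ℂ => Complex.sinh ((Real.pi:ℂ) * z / 2))
      (Complex.cosh ((Real.pi:ℂ) * z₀ / 2) * ((Real.pi:ℂ)/2)) z₀ :=
    (Complex.hasDerivAt_sinh _).comp z₀ hin
  have hcosh : HasDerivAt (fun z : ℂ => Complex.cosh ((Real.pi:ℂ) * z / 2))
      (Complex.sinh ((Real.pi:ℂ) * z₀ / 2) * ((Real.pi:ℂ)/2)) z₀ :=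
    (Complex.hasDerivAt_cosh _).comp z₀ hin
  have hq := ((hsinh.const_mul C).div (hcosh.const_add a) hden)
  exact ((hasDerivAt_id z₀).add hq).deriv

set_option maxHeartbeats 1000000 in
theorem statement15 (β : ℝ) (hβ : β ∈ Ioo (0 : ℝ) 1) :
    ∀ ξ : ℝ, deriv (fCNK β) ((ξ : ℂ) + Complex.I) ≠ 0 ∧
      ‖Wzeta (gammaCNK β) β ((ξ : ℂ) + Complex.I)‖ =
        ‖deriv (fCNK β) ((ξ : ℂ) + Complex.I)‖ := by
  obtain ⟨hβ0, hβ1⟩ := hβ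
  intro ξ
  have hπ := Real.pi_pos
  set s : ℝ := Real.sinh (Real.pi * ξ / 2) with hs_def
  set c : ℝ := Real.cosh (Real.pi * ξ / 2) with hc_def
  set sb : ℝ := Real.sin (Real.pi * β / 2) with hsb_def
  set cb : ℝ := Real.cos (Real.pi * β / 2) with hcb_def
  have hang0 : 0 < Real.pi * β / 2 := by positivity
  have hang1 : Real.pi * β / 2 < Real.pi / 2 := by nlinarith
  have hcb : 0 < cb := Real.cos_pos_of_mem_Ioo ⟨by linarith, hang1⟩
  have hsb : 0 < sb := Real.sin_pos_of_pos_of_lt_pi hang0 (by linarith)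
  have hpyth : sb^2 + cb^2 = 1 := by
    simpa [hsb_def, hcb_def] using Real.sin_sq_add_cos_sq (Real.pi * β / 2)
  have hc2 : c^2 = 1 + s^2 := by
    have := Real.cosh_sq (Real.pi * ξ / 2); rw [← hs_def, ← hc_def] at this; linarith
  have hc0 : 0 < c := Real.cosh_pos _
  set T : ℝ := Real.tan (Real.pi * β / 2) ^ 2 with hT_def
  have hT : T = sb^2 / cb^2 := by
    rw [hT_def, Real.tan_eq_sin_div_cos, div_pow, ← hsb_def, ← hcb_def]
  have hTpos : 0 ≤ T := by rw [hT]; positivity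
  set D : ℝ := s^2 + cb^2 with hD_def
  have hD : 0 < D := by positivity
  have hc2' : (c:ℂ)^2 = 1 + (s:ℂ)^2 := by exact_mod_cast congrArg (Complex.ofReal) hc2
  have hpyth' : (sb:ℂ)^2 + (cb:ℂ)^2 = 1 := by exact_mod_cast congrArg (Complex.ofReal) hpyth
  -- complex evaluation of sinh/cosh at π(ξ+I)/2
  have harg : (Real.pi:ℂ) * ((ξ:ℂ) + Complex.I) / 2
      = ((Real.pi * ξ / 2 : ℝ) : ℂ) + ((Real.pi/2 : ℝ) : ℂ) * Complex.I := by
    push_cast; ring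
  have hcoshz : Complex.cosh ((Real.pi:ℂ) * ((ξ:ℂ) + Complex.I) / 2) = (s:ℂ) * Complex.I := by
    rw [harg, ccosh_eval, Real.cos_pi_div_two, Real.sin_pi_div_two, ← hs_def]
    push_cast; ring
  have hsinhz : Complex.sinh ((Real.pi:ℂ) * ((ξ:ℂ) + Complex.I) / 2) = (c:ℂ) * Complex.I := by
    rw [harg, csinh_eval, Real.cos_pi_div_two, Real.sin_pi_div_two, ← hc_def]
    push_cast; ring
  have hdenne : ((cb:ℝ) : ℂ) + (s:ℂ) * Complex.I ≠ 0 := by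
    intro h
    have := congrArg Complex.re h
    simp at this
    exact absurd this (ne_of_gt hcb)
  have hden2ne : (((cb:ℝ) : ℂ) + (s:ℂ) * Complex.I)^2 ≠ 0 := pow_ne_zero 2 hdenne
  -- the derivative
  have hderiv : deriv (fCNK β) ((ξ:ℂ) + Complex.I) =
      (((cb:ℂ) + (s:ℂ)*Complex.I)^2 + 4*(T:ℂ) * (1 + (cb:ℂ)*(s:ℂ)*Complex.I)) /
        ((cb:ℂ) + (s:ℂ)*Complex.I)^2 := by
    have hden' : ((Real.cos (Real.pi * β / 2) : ℝ) : ℂ) +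
        Complex.cosh ((Real.pi : ℂ) * ((ξ:ℂ) + Complex.I) / 2) ≠ 0 := by
      rw [hcoshz, ← hcb_def]; exact hdenne
    have hC : ((8 / Real.pi * Real.tan (Real.pi * β / 2) ^ 2 : ℝ) : ℂ) * ((Real.pi:ℂ)/2)
        = 4*(T:ℂ) := by
      rw [hT_def]
      have hπ' : (Real.pi : ℂ) ≠ 0 := by exact_mod_cast Real.pi_ne_zero
      push_cast
      field_simp
      ring
    rw [deriv_fCNK_eval β ξ hden', hcoshz, hsinhz, ← hcb_def, ← hT_def]
    rw [eq_div_iff hden2ne, add_mul, one_mul, div_mul_cancel₀ _ hden2ne]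
    linear_combination ((s:ℂ)*Complex.I*(cb:ℂ) + Complex.I^2*(s:ℂ)^2 - Complex.I^2*(c:ℂ)^2) * hC
      + 4*(T:ℂ)*((s:ℂ)^2-(c:ℂ)^2) * Complex.I_sq + 4*(T:ℂ)*hc2'
  -- norm of the derivative
  have hNum : (((cb:ℂ) + (s:ℂ)*Complex.I)^2 + 4*(T:ℂ) * (1 + (cb:ℂ)*(s:ℂ)*Complex.I))
      = ((cb^2 - s^2 + 4*T : ℝ):ℂ) + ((2*cb*s + 4*T*cb*s : ℝ):ℂ)*Complex.I := by
    push_cast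
    linear_combination ((s:ℂ)^2) * Complex.I_sq
  have habsNum : ‖(((cb:ℂ) + (s:ℂ)*Complex.I)^2 + 4*(T:ℂ) * (1 + (cb:ℂ)*(s:ℂ)*Complex.I))‖
      = D + 4*T := by
    rw [hNum, Complex.norm_def, Complex.normSq_add_mul_I,
      keyiden s cb sb T (ne_of_gt hcb) hpyth hT, ← hD_def]
    exact Real.sqrt_sq (by positivity)
  have habsDen : ‖((cb:ℂ) + (s:ℂ)*Complex.I)‖ = Real.sqrt D := by
    rw [Complex.norm_def, Complex.normSq_add_mul_I, hD_def]
    ring_nf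
  have hfnorm : ‖deriv (fCNK β) ((ξ:ℂ) + Complex.I)‖ = (D + 4*T)/D := by
    rw [hderiv, norm_div, norm_pow, habsNum, habsDen, Real.sq_sqrt (le_of_lt hD)]
  -- Wzeta evaluation
  set u : ℂ := (Real.pi : ℂ) / 2 * (((ξ:ℂ) + Complex.I) - Complex.I * (β:ℂ)) with hu_def
  set v : ℂ := (Real.pi : ℂ) / 2 * (((ξ:ℂ) + Complex.I) + Complex.I * (β:ℂ)) with hv_def
  have hu : u = ((Real.pi * ξ / 2 : ℝ):ℂ) + ((Real.pi * (1-β) / 2 : ℝ):ℂ)*Complex.I := by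
    rw [hu_def]; push_cast; ring
  have hv : v = ((Real.pi * ξ / 2 : ℝ):ℂ) + ((Real.pi * (1+β) / 2 : ℝ):ℂ)*Complex.I := by
    rw [hv_def]; push_cast; ring
  have h1 : Real.pi * (1-β)/2 = Real.pi/2 - Real.pi * β / 2 := by ring
  have h2 : Real.pi * (1+β)/2 = Real.pi/2 + Real.pi * β / 2 := by ring
  have hcos1 : Real.cos (Real.pi * (1-β)/2) = sb := by
    rw [h1, Real.cos_pi_div_two_sub, hsb_def]
  have hsin1 : Real.sin (Real.pi * (1-β)/2) = cb := by
    rw [h1, Real.sin_pi_div_two_sub, hcb_def]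
  have hcos2 : Real.cos (Real.pi * (1+β)/2) = -sb := by
    rw [h2, Real.cos_add, Real.cos_pi_div_two, Real.sin_pi_div_two, hsb_def]; ring
  have hsin2 : Real.sin (Real.pi * (1+β)/2) = cb := by
    rw [h2, Real.sin_add, Real.cos_pi_div_two, Real.sin_pi_div_two, hcb_def]; ring
  have hsinhu : Complex.sinh u = ((s*sb : ℝ):ℂ) + ((c*cb : ℝ):ℂ)*Complex.I := by
    rw [hu, csinh_eval, hcos1, hsin1, ← hs_def, ← hc_def]
  have hsinhv : Complex.sinh v = ((-(s*sb) : ℝ):ℂ) + ((c*cb : ℝ):ℂ)*Complex.I := by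
    rw [hv, csinh_eval, hcos2, hsin2, ← hs_def, ← hc_def]; push_cast; ring
  have hune : Complex.sinh u ≠ 0 := by
    rw [hsinhu]; intro h
    have := congrArg Complex.im h
    simp at this
    rcases this with h' | h' <;> [exact absurd h' (ne_of_gt hc0); exact absurd h' (ne_of_gt hcb)]
  have hvne : Complex.sinh v ≠ 0 := by
    rw [hsinhv]; intro h
    have := congrArg Complex.im h
    simp at this
    rcases this with h' | h' <;> [exact absurd h' (ne_of_gt hc0); exact absurd h' (ne_of_gt hcb)]
  have hdiff : cCoth u - cCoth v = Complex.sinh (v - u) / (Complex.sinh u * Complex.sinh v) := by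
    unfold cCoth
    rw [div_sub_div _ _ hune hvne, Complex.sinh_sub]
    congr 1
    ring
  have hvmu : Complex.sinh (v - u) = ((2*sb*cb : ℝ):ℂ)*Complex.I := by
    have : v - u = ((Real.pi * β : ℝ):ℂ)*Complex.I := by rw [hu_def, hv_def]; push_cast; ring
    rw [this, Complex.sinh_mul_I, ← Complex.ofReal_sin]
    have : Real.sin (Real.pi * β) = 2*sb*cb := by
      have : Real.pi * β = 2*(Real.pi * β / 2) := by ring
      rw [this, Real.sin_two_mul, ← hsb_def, ← hcb_def]
    rw [this]
  have hprod : Complex.sinh u * Complex.sinh v = ((-(s^2+cb^2) : ℝ):ℂ) := by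
    rw [hsinhu, hsinhv]
    push_cast
    linear_combination ((c:ℂ)^2*(cb:ℂ)^2) * Complex.I_sq - (cb:ℂ)^2 * hc2' - (s:ℂ)^2 * hpyth'
  have hW : Wzeta (gammaCNK β) β ((ξ:ℂ) + Complex.I)
      = ((1 + 4*sb^2/(cb^2*D) : ℝ):ℂ) := by
    unfold Wzeta gammaCNK
    rw [← hu_def, ← hv_def, hdiff, hvmu, hprod, ← hsb_def, ← hcb_def, hD_def]
    have hDne : (s:ℂ)^2 + (cb:ℂ)^2 ≠ 0 := by
      intro h
      have : ((s^2 + cb^2 : ℝ):ℂ) = 0 := by push_cast; linear_combination h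
      exact absurd (Complex.ofReal_eq_zero.mp this) (ne_of_gt hD)
    have hcbne : (cb:ℂ) ≠ 0 := Complex.ofReal_ne_zero.mpr (ne_of_gt hcb)
    rw [Idiv]
    have hcast : ((1 + (-8*sb/cb^3) * (2*sb*cb) / (4*(-(s^2+cb^2))) : ℝ) : ℂ)
        = 1 + ((-8*sb/cb^3 : ℝ):ℂ) * ((2*sb*cb : ℝ):ℂ) / (4*((-(s^2+cb^2) : ℝ):ℂ)) := by
      push_cast; ring
    rw [← hcast, Complex.ofReal_inj]
    have h1 : s^2+cb^2 ≠ 0 := ne_of_gt hD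
    have h2 : cb ≠ 0 := ne_of_gt hcb
    have h3 : -(cb ^ 3 * s ^ 2 * 4) - cb ^ 5 * 4 ≠ 0 := by
      have he : -(cb ^ 3 * s ^ 2 * 4) - cb ^ 5 * 4 = -(4*cb^3*(s^2+cb^2)) := by ring
      rw [he, neg_ne_zero]
      positivity
    field_simp
    ring
  have hWnorm : ‖Wzeta (gammaCNK β) β ((ξ:ℂ) + Complex.I)‖ = 1 + 4*sb^2/(cb^2*D) := by
    rw [hW, Complex.norm_real, Real.norm_eq_abs]
    exact abs_of_nonneg (by positivity)
  constructor
  · intro h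
    have : ‖deriv (fCNK β) ((ξ:ℂ) + Complex.I)‖ = 0 := by rw [h]; simp
    rw [hfnorm] at this
    have : 0 < (D + 4*T)/D := by positivity
    linarith
  · rw [hWnorm, hfnorm, hT]
    field_simp
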